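/- If G is an n-vertex graph (n ≥ 3) with minimum degree δ(G) ≥ n/2, then G contains a Hamiltonian cycle. -/

import Mathlib

open SimpleGraph Walk Finset List

section Aux
variable {V : Type*} [Fintype V] [DecidableEq V] (G : SimpleGraph V) [DecidableRel G.Adj]

lemma dirac_common (hδ : ∀ v : V, Fintype.card V ≤ 2 * G.degree v) {a b : V} (hab : a ≠ b)
    (hadj : ¬ G.Adj a b) : ∃ c, G.Adj a c ∧ G.Adj b c := by
  by_contra h
  push_neg at h
  have hdisj : Disjoint (G.neighborFinset a) (G.neighborFinset b) := by
    rw [Finset.disjoint_left]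
    intro c hca hcb
    exact h c (by simpa using hca) (by simpa using hcb)
  have hsub : G.neighborFinset a ∪ G.neighborFinset b ⊆ (Finset.univ.erase a).erase b := by
    intro x hx
    rw [Finset.mem_union] at hx
    rw [Finset.mem_erase, Finset.mem_erase]
    rcases hx with hx | hx
    · rw [SimpleGraph.mem_neighborFinset] at hx
      exact ⟨fun hxb => hadj (hxb ▸ hx), hx.ne', Finset.mem_univ _⟩
    · rw [SimpleGraph.mem_neighborFinset] at hx
      exact ⟨hx.ne', fun hxa => hadj (hxa ▸ hx).symm, Finset.mem_univ _⟩
  have hcard := Finset.card_le_card hsub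
  rw [Finset.card_union_of_disjoint hdisj] at hcard
  have h1 : ((Finset.univ.erase a).erase b).card ≤ Fintype.card V - 2 := by
    rw [Finset.card_erase_of_mem (Finset.mem_erase.mpr ⟨hab.symm, Finset.mem_univ _⟩),
      Finset.card_erase_of_mem (Finset.mem_univ _), Finset.card_univ]
    omega
  have ha := hδ a
  have hb := hδ b
  rw [← SimpleGraph.card_neighborFinset_eq_degree] at ha hb
  have h2 : 1 < Fintype.card V := Fintype.one_lt_card_iff.mpr ⟨a, b, hab⟩
  omega

lemma dirac_max_path [Nonempty V] : ∃ (u v : V) (p : G.Walk u v), p.IsPath ∧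
    ∀ (a b : V) (q : G.Walk a b), q.IsPath → q.length ≤ p.length := by
  obtain ⟨x⟩ := ‹Nonempty V›
  have hne : (Finset.univ : Finset ((u : V) × (v : V) × G.Path u v)).Nonempty :=
    ⟨⟨x, x, ⟨Walk.nil, Walk.IsPath.nil⟩⟩, Finset.mem_univ _⟩
  obtain ⟨⟨u, v, p⟩, -, hmax⟩ := Finset.exists_max_image Finset.univ
    (fun t : (u : V) × (v : V) × G.Path u v => (t.2.2 : G.Walk t.1 t.2.1).length) hne
  exact ⟨u, v, p, p.2, fun a b q hq => hmax ⟨a, b, ⟨q, hq⟩⟩ (Finset.mem_univ _)⟩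

lemma dirac_nbr_mem_support {u v : V} {p : G.Walk u v} (hp : p.IsPath)
    (hmax : ∀ (a b : V) (q : G.Walk a b), q.IsPath → q.length ≤ p.length)
    {w : V} (h : G.Adj u w) : w ∈ p.support := by
  by_contra hw
  have := hmax w v (Walk.cons h.symm p) (hp.cons hw)
  simp at this

lemma dirac_dart_split {u v : V} (p : G.Walk u v) (d : G.Dart) (hd : d ∈ p.darts) :
    ∃ (q : G.Walk u d.fst) (r : G.Walk d.snd v), p = q.append (Walk.cons d.adj r) := by
  induction p with
  | nil => simp at hd
  | cons h p' ih =>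
    rw [Walk.darts_cons, List.mem_cons] at hd
    rcases hd with rfl | hd
    · exact ⟨Walk.nil, p', rfl⟩
    · obtain ⟨q, r, hqr⟩ := ih hd
      exact ⟨Walk.cons h q, r, by rw [hqr, Walk.cons_append]⟩

lemma dirac_loop_length {u : V} {q : G.Walk u u} (h : q.support.Nodup) : q.length = 0 := by
  cases q with
  | nil => rfl
  | cons h' q' =>
    rw [Walk.support_cons, List.nodup_cons] at h
    exact absurd (Walk.end_mem_support q') h.1

end Aux



/-- Dirac's theorem: if `G` is a graph on `n ≥ 3` vertices with minimum degree at least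
`n / 2` (i.e. `n ≤ 2 · deg v` for every vertex `v`), then `G` is Hamiltonian. -/
theorem stmt_0 {V : Type*} [Fintype V] [DecidableEq V] (G : SimpleGraph V)
    [DecidableRel G.Adj] (hn : 3 ≤ Fintype.card V)
    (hδ : ∀ v : V, Fintype.card V ≤ 2 * G.degree v) :
    G.IsHamiltonian := by
  classical
  intro _
  have hNE : Nonempty V := by
    rw [← Fintype.card_pos_iff]; omega
  obtain ⟨u, v, p, hp, hmax⟩ := dirac_max_path G
  -- length at least 2
  have hk2 : 2 ≤ p.length := by
    obtain ⟨a⟩ := hNE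
    have hdeg : 1 < G.degree a := by have := hδ a; omega
    rw [← SimpleGraph.card_neighborFinset_eq_degree, Finset.one_lt_card] at hdeg
    obtain ⟨b, hb, c, hc, hbc⟩ := hdeg
    rw [SimpleGraph.mem_neighborFinset] at hb hc
    have hpath : (Walk.cons hb.symm (Walk.cons hc Walk.nil)).IsPath := by
      rw [Walk.isPath_def]
      simp [hb.ne', hc.ne, hbc]
    simpa using hmax _ _ _ hpath
  -- neighbors of the endpoints are on the path
  have hu_nbr : ∀ w, G.Adj u w → w ∈ p.support := fun w h => dirac_nbr_mem_support G hp hmax h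
  have hv_nbr : ∀ w, G.Adj v w → w ∈ p.support := by
    intro w h
    have hmax' : ∀ (a b : V) (q : G.Walk a b), q.IsPath → q.length ≤ p.reverse.length := by
      intro a b q hq
      rw [Walk.length_reverse]
      exact hmax a b q hq
    have := dirac_nbr_mem_support G hp.reverse hmax' h
    simpa [Walk.support_reverse] using this
  have hnodup : p.support.Nodup := hp.support_nodup
  -- counting darts
  set S : Finset G.Dart := p.darts.toFinset with hS
  have hdnodup : p.darts.Nodup := Walk.darts_nodup_of_support_nodup hnodup
  have hScard : S.card = p.length := by
    rw [hS, List.toFinset_card_of_nodup hdnodup, Walk.length_darts]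
  set A : Finset G.Dart := S.filter (fun d => G.Adj u d.snd) with hA
  set B : Finset G.Dart := S.filter (fun d => G.Adj v d.fst) with hB
  have hAcard : A.card = G.degree u := by
    rw [← SimpleGraph.card_neighborFinset_eq_degree]
    apply Finset.card_bij (fun d _ => d.snd)
    · intro d hd
      rw [hA, Finset.mem_filter] at hd
      rw [SimpleGraph.mem_neighborFinset]
      exact hd.2
    · intro d1 h1 d2 h2 he
      rw [hA, Finset.mem_filter, hS, List.mem_toFinset] at h1 h2
      have hsnd : (p.darts.map (·.snd)).Nodup := by
        rw [Walk.map_snd_darts]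
        exact hnodup.tail
      exact List.inj_on_of_nodup_map hsnd h1.1 h2.1 he
    · intro w hw
      rw [SimpleGraph.mem_neighborFinset] at hw
      have hws : w ∈ p.support.tail := by
        have := hu_nbr w hw
        rw [p.support_eq_cons, List.mem_cons] at this
        rcases this with rfl | h
        · exact absurd rfl hw.ne
        · exact h
      rw [← Walk.map_snd_darts, List.mem_map] at hws
      obtain ⟨d, hd, hds⟩ := hws
      refine ⟨d, ?_, hds⟩
      rw [hA, Finset.mem_filter, hS, List.mem_toFinset]
      exact ⟨hd, hds ▸ hw⟩
  have hBcard : B.card = G.degree v := by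
    rw [← SimpleGraph.card_neighborFinset_eq_degree]
    apply Finset.card_bij (fun d _ => d.fst)
    · intro d hd
      rw [hB, Finset.mem_filter] at hd
      rw [SimpleGraph.mem_neighborFinset]
      exact hd.2
    · intro d1 h1 d2 h2 he
      rw [hB, Finset.mem_filter, hS, List.mem_toFinset] at h1 h2
      have hfst : (p.darts.map (·.fst)).Nodup := by
        rw [Walk.map_fst_darts]
        exact hnodup.sublist (List.dropLast_sublist _)
      exact List.inj_on_of_nodup_map hfst h1.1 h2.1 he
    · intro w hw
      rw [SimpleGraph.mem_neighborFinset] at hw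
      have hws : w ∈ p.support.dropLast := by
        have hmem := hv_nbr w hw
        have hlast : p.support.getLast (p.support_ne_nil) = v := by
          rw [Walk.getLast_support]
        have hsplit := List.dropLast_append_getLast (p.support_ne_nil)
        rw [hlast] at hsplit
        rw [← hsplit, List.mem_append, List.mem_singleton] at hmem
        rcases hmem with h | rfl
        · exact h
        · exact absurd rfl hw.ne
      rw [← Walk.map_fst_darts, List.mem_map] at hws
      obtain ⟨d, hd, hds⟩ := hws
      refine ⟨d, ?_, hds⟩
      rw [hB, Finset.mem_filter, hS, List.mem_toFinset]
      exact ⟨hd, hds ▸ hw⟩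
  -- pigeonhole
  have hABsub : A ∪ B ⊆ S := by
    intro d hd
    rw [Finset.mem_union, hA, hB, Finset.mem_filter, Finset.mem_filter] at hd
    rcases hd with h | h <;> exact h.1
  have hlt : p.length < Fintype.card V := hp.length_lt
  have hsum : Fintype.card V ≤ G.degree u + G.degree v := by
    have := hδ u; have := hδ v; omega
  have hinter : (A ∩ B).Nonempty := by
    rw [← Finset.card_pos]
    have h1 := Finset.card_union_add_card_inter A B
    have h2 := Finset.card_le_card hABsub
    omega
  obtain ⟨d, hd⟩ := hinter
  rw [Finset.mem_inter, hA, hB, Finset.mem_filter, Finset.mem_filter, hS,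
    List.mem_toFinset] at hd
  obtain ⟨⟨hdarts, huy⟩, -, hvx⟩ := hd
  obtain ⟨q, r, hpq⟩ := dirac_dart_split G p d hdarts
  -- support decomposition
  have hsupp : p.support = q.support ++ r.support := by
    rw [hpq, Walk.support_append, Walk.support_cons, List.tail_cons]
  have hqr_disj : q.support.Disjoint r.support := by
    rw [hsupp] at hnodup
    exact List.disjoint_of_nodup_append hnodup
  -- build the cycle
  set w0 : G.Walk d.snd u := r.append (Walk.cons hvx q.reverse) with hw0
  have hw0supp : w0.support = r.support ++ q.support.reverse := by
    rw [hw0, Walk.support_append, Walk.support_cons, List.tail_cons, Walk.support_reverse]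
  have hperm : w0.support.Perm p.support := by
    rw [hw0supp, hsupp]
    calc r.support ++ q.support.reverse
        ~ q.support.reverse ++ r.support := List.perm_append_comm
      _ ~ q.support ++ r.support := (q.support.reverse_perm).append_right _
  have hw0nodup : w0.support.Nodup := hperm.nodup_iff.mpr hnodup
  have hw0path : w0.IsPath := Walk.IsPath.mk' hw0nodup
  have hedge : s(u, d.snd) ∉ w0.edges := by
    intro hmem
    rw [hw0, Walk.edges_append, Walk.edges_cons, List.mem_append, List.mem_cons] at hmem
    have hqsupnd : (q.support ++ r.support).Nodup := hsupp ▸ hnodup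
    rcases hmem with h | h | h
    · exact hqr_disj (Walk.start_mem_support q) (Walk.fst_mem_support_of_mem_edges r h)
    · rw [Sym2.eq_iff] at h
      rcases h with ⟨h1, h2⟩ | ⟨h1, h2⟩
      · exact hqr_disj (h1 ▸ Walk.start_mem_support q) (Walk.end_mem_support r)
      · -- u = d.fst and d.snd = v : then p has length 1
        have hqnil : (q.copy rfl h1.symm).length = 0 := by
          apply dirac_loop_length G
          rw [Walk.support_copy]
          exact hqsupnd.of_append_left
        have hrnil : (r.copy h2 rfl).length = 0 := by
          apply dirac_loop_length G
          rw [Walk.support_copy]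
          exact hqsupnd.of_append_right
        rw [Walk.length_copy] at hqnil hrnil
        have : p.length = q.length + (1 + r.length) := by
          rw [hpq, Walk.length_append, Walk.length_cons]; omega
        omega
    · rw [Walk.edges_reverse, List.mem_reverse] at h
      exact hqr_disj (Walk.snd_mem_support_of_mem_edges q h) (Walk.start_mem_support r)
  have hcyc : (Walk.cons huy w0).IsCycle := by
    rw [Walk.cons_isCycle_iff]
    exact ⟨hw0path, hedge⟩
  set c : G.Walk u u := Walk.cons huy w0 with hc
  have hcsupp : c.support.tail = w0.support := by
    rw [hc, Walk.support_cons, List.tail_cons]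
  have hclen : c.length = p.length + 1 := by
    have h1 : p.length = q.length + (1 + r.length) := by
      rw [hpq, Walk.length_append, Walk.length_cons]; omega
    have h2 : c.length = 1 + (r.length + (1 + q.length)) := by
      rw [hc, Walk.length_cons, hw0, Walk.length_append, Walk.length_cons,
        Walk.length_reverse]
      omega
    omega
  by_cases hall : ∀ z : V, z ∈ p.support
  · refine ⟨u, c, ?_⟩
    rw [Walk.isHamiltonianCycle_iff_isCycle_and_support_count_tail_eq_one]
    refine ⟨hcyc, fun a => ?_⟩
    rw [hcsupp]
    exact List.count_eq_one_of_mem hw0nodup (hperm.mem_iff.mpr (hall a))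
  · push_neg at hall
    obtain ⟨z0, hz0⟩ := hall
    obtain ⟨a, b, ha, hb, hab⟩ :
        ∃ a b, a ∉ p.support ∧ b ∈ p.support ∧ G.Adj a b := by
      by_cases h1 : G.Adj z0 u
      · exact ⟨z0, u, hz0, p.start_mem_support, h1⟩
      · have hne : z0 ≠ u := by rintro rfl; exact hz0 p.start_mem_support
        obtain ⟨t, h1t, h2t⟩ := dirac_common G hδ hne h1
        by_cases ht : t ∈ p.support
        · exact ⟨z0, t, hz0, ht, h1t⟩
        · exact ⟨t, u, ht, p.start_mem_support, h2t.symm⟩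
    have hbmem : b ∈ c.support := by
      rw [hc, Walk.support_cons, List.mem_cons]
      exact Or.inr (hperm.mem_iff.mpr hb)
    set c' := c.rotate b hbmem with hc'
    have hcyc' : c'.IsCycle := hcyc.rotate hbmem
    have hnn : ¬ c'.Nil := hcyc'.not_nil
    have hc'tail : c'.support.tail.Perm p.support := by
      have h1 : c'.support.tail ~r c.support.tail := Walk.support_rotate c b hbmem
      exact (h1.perm).trans (hcsupp ▸ hperm)
    have hc'len : c'.length = c.length := by
      have h1 := congrArg Walk.length (c.take_spec hbmem)
      rw [Walk.length_append] at h1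
      rw [hc', Walk.rotate, Walk.length_append]
      omega
    set P : G.Walk a (c'.getVert 1) := Walk.cons hab c'.tail.reverse with hP
    have hPpath : P.IsPath := by
      apply Walk.IsPath.mk'
      rw [hP, Walk.support_cons, Walk.support_reverse, Walk.support_tail_of_not_nil c' hnn,
        List.nodup_cons, List.nodup_reverse]
      constructor
      · rw [List.mem_reverse]
        intro hmem
        exact ha (hc'tail.mem_iff.mp hmem)
      · exact hcyc'.support_nodup
    have hPlen : P.length = p.length + 1 := by
      have h1 : c'.tail.length + 1 = c'.length := Walk.length_tail_add_one hnn
      rw [hP, Walk.length_cons, Walk.length_reverse]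
      omega
    have := hmax _ _ P hPpath
    omega
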